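/- Let K be a number field and let 𝐋 be an algebraic (possibly infinite-degree) field extension of K. Suppose there exists a subset S of 𝒪_𝐋 with (the image of) ℕ ⊆ S ⊆ 𝒪_K (i.e., S is contained in the image of 𝒪_K in 𝒪_𝐋 and contains the image of every natural number), and suppose S has a diophantine definition over 𝒪_𝐋. Then the image of 𝒪_K in 𝒪_𝐋 has a diophantine definition over 𝒪_𝐋. -/

import Mathlib

set_option maxHeartbeats 1000000
set_option synthInstance.maxHeartbeats 200000

open MvPolynomial

/-- A subset `E` of a commutative ring `R` has a diophantine definition over `R` if there is a
finite system of polynomials `f₁, …, f_k ∈ R[t, x₁, …, x_n]` such that `τ ∈ E` iff the system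
`fᵢ(τ, a₁, …, a_n) = 0` has a solution `a₁, …, a_n ∈ R`. -/
def IsDiophantineOver (R : Type*) [CommRing R] (E : Set R) : Prop :=
  ∃ (n k : ℕ) (f : Fin k → MvPolynomial (Fin (n + 1)) R),
    ∀ τ : R, τ ∈ E ↔ ∃ a : Fin n → R, ∀ i, MvPolynomial.eval (Fin.cons τ a) (f i) = 0

/-- A version of `IsDiophantineOver` with arbitrary finite index types. -/
def DioOver' (R : Type*) [CommRing R] (E : Set R) : Prop :=
  ∃ (ι κ : Type) (_ : Fintype ι) (_ : Fintype κ) (f : κ → MvPolynomial (Option ι) R),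
    ∀ τ : R, τ ∈ E ↔ ∃ a : ι → R, ∀ i, MvPolynomial.eval (Option.elim' τ a) (f i) = 0

theorem dioOver'_of_isDiophantineOver {R : Type*} [CommRing R] {E : Set R}
    (h : IsDiophantineOver R E) : DioOver' R E := by
  obtain ⟨n, k, f, hf⟩ := h
  refine ⟨Fin n, Fin k, inferInstance, inferInstance,
    fun j => rename (Fin.cons none some) (f j), fun τ => ?_⟩
  rw [hf τ]
  refine exists_congr fun a => forall_congr' fun j => ?_
  have key : (Option.elim' τ a) ∘ (Fin.cons none some : Fin (n+1) → Option (Fin n))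
      = Fin.cons τ a := by
    funext i
    refine Fin.cases ?_ (fun i => ?_) i
    · simp [Option.elim']
    · simp [Option.elim']
  rw [eval_rename, key]

theorem isDiophantineOver_of_dioOver' {R : Type*} [CommRing R] {E : Set R}
    (h : DioOver' R E) : IsDiophantineOver R E := by
  obtain ⟨ι, κ, _, _, g, hg⟩ := h
  let eι := Fintype.equivFin ι
  let eκ := Fintype.equivFin κ
  refine ⟨Fintype.card ι, Fintype.card κ,
    fun j => rename (Option.elim' 0 (fun i => (eι i).succ)) (g (eκ.symm j)), fun τ => ?_⟩
  rw [hg τ]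
  have key : ∀ (a : Fin (Fintype.card ι) → R),
      (Fin.cons τ a : Fin (Fintype.card ι + 1) → R) ∘
        (Option.elim' 0 (fun i => (eι i).succ)) = Option.elim' τ (a ∘ eι) := by
    intro a
    funext o
    cases o with
    | none => simp [Option.elim']
    | some i => simp [Option.elim']
  constructor
  · rintro ⟨a, ha⟩
    refine ⟨a ∘ eι.symm, fun j => ?_⟩
    rw [eval_rename, key]
    have : (a ∘ eι.symm) ∘ eι = a := by funext i; simp
    rw [this]
    exact ha (eκ.symm j)
  · rintro ⟨a, ha⟩
    refine ⟨a ∘ eι, fun j => ?_⟩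
    have := ha (eκ j)
    rw [eval_rename, key, Equiv.symm_apply_apply] at this
    exact this

/-- Main construction: substituting `S`-constrained variables into a polynomial equation. -/
theorem dio_subst {R : Type*} [CommRing R] {S : Set R} (hS : DioOver' R S)
    (μ : Type) [Fintype μ] (P : MvPolynomial (Option μ) R) :
    DioOver' R {x | ∃ c : μ → R, (∀ i, c i ∈ S) ∧
      MvPolynomial.eval (Option.elim' x c) P = 0} := by
  obtain ⟨ι₀, κ₀, _, _, f, hf⟩ := hS
  refine ⟨μ ⊕ μ × ι₀, μ × κ₀ ⊕ Unit, inferInstance, inferInstance,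
    Sum.elim
      (fun p => rename
        (Option.elim' (some (Sum.inl p.1)) (fun l => some (Sum.inr (p.1, l)))) (f p.2))
      (fun _ => rename (Option.map Sum.inl) P), fun τ => ?_⟩
  constructor
  · rintro ⟨c, hc, heq⟩
    choose u hu using fun i => (hf (c i)).mp (hc i)
    refine ⟨Sum.elim c (fun p : μ × ι₀ => u p.1 p.2), ?_⟩
    rintro (⟨i, j⟩ | _)
    · rw [Sum.elim_inl, eval_rename]
      have h1 : (Option.elim' τ (Sum.elim c (fun p : μ × ι₀ => u p.1 p.2))) ∘
          (Option.elim' (some (Sum.inl i)) (fun l => some (Sum.inr (i, l))))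
          = Option.elim' (c i) (u i) := by
        funext o; cases o <;> simp [Option.elim']
      rw [h1]
      exact hu i j
    · rw [Sum.elim_inr, eval_rename]
      have h2 : (Option.elim' τ (Sum.elim c (fun p : μ × ι₀ => u p.1 p.2))) ∘
          (Option.map Sum.inl) = Option.elim' τ c := by
        funext o; cases o <;> simp [Option.elim']
      rw [h2]
      exact heq
  · rintro ⟨a, ha⟩
    refine ⟨fun i => a (Sum.inl i), fun i => ?_, ?_⟩
    · refine (hf _).mpr ⟨fun l => a (Sum.inr (i, l)), fun j => ?_⟩
      have := ha (Sum.inl (i, j))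
      rw [Sum.elim_inl, eval_rename] at this
      have he : (Option.elim' τ a) ∘
          (Option.elim' (some (Sum.inl i)) (fun l => some (Sum.inr (i, l))))
          = Option.elim' (a (Sum.inl i)) (fun l => a (Sum.inr (i, l))) := by
        funext o; cases o <;> simp [Option.elim']
      rwa [he] at this
    · have := ha (Sum.inr ())
      rw [Sum.elim_inr, eval_rename] at this
      have he : (Option.elim' τ a) ∘ (Option.map Sum.inl)
          = Option.elim' τ (fun i => a (Sum.inl i)) := by
        funext o; cases o <;> simp [Option.elim']
      rwa [he] at this

section NT

variable (K : Type*) [Field K] [NumberField K]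
  (L : Type*) [Field L] [CharZero L] [Algebra K L]

/-- The canonical ring hom `𝓞 K →+* integralClosure ℤ L`. -/
noncomputable def roMap : NumberField.RingOfIntegers K →+* integralClosure ℤ L :=
  RingHom.codRestrict ((algebraMap K L).comp (algebraMap (NumberField.RingOfIntegers K) K))
    (integralClosure ℤ L).toSubring
    (fun y => IsIntegral.map (algebraMap K L).toIntAlgHom
      (NumberField.RingOfIntegers.isIntegral_coe y))

omit [NumberField K] [CharZero L] in
@[simp] lemma roMap_coe (y : NumberField.RingOfIntegers K) :
    ((roMap K L y : integralClosure ℤ L) : L)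
      = algebraMap K L (algebraMap (NumberField.RingOfIntegers K) K y) := rfl

end NT

theorem stmt_2 (K : Type*) [Field K] [NumberField K]
    (L : Type*) [Field L] [CharZero L] [Algebra K L] [Algebra.IsAlgebraic K L]
    (S : Set (integralClosure ℤ L))
    (hNat : ∀ n : ℕ, (n : integralClosure ℤ L) ∈ S)
    (hSub : ∀ x ∈ S, ∃ y : NumberField.RingOfIntegers K,
      algebraMap K L (algebraMap (NumberField.RingOfIntegers K) K y) = (x : L))
    (hdio : IsDiophantineOver (integralClosure ℤ L) S) :
    IsDiophantineOver (integralClosure ℤ L)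
      {x : integralClosure ℤ L | ∃ y : NumberField.RingOfIntegers K,
        algebraMap K L (algebraMap (NumberField.RingOfIntegers K) K y) = (x : L)} := by
  classical
  let φ := roMap K L
  let d := Fintype.card (Module.Free.ChooseBasisIndex ℤ (NumberField.RingOfIntegers K))
  let b : Module.Basis (Fin d) ℤ (NumberField.RingOfIntegers K) :=
    (NumberField.RingOfIntegers.basis K).reindex (Fintype.equivFin _)
  let w : Fin d → integralClosure ℤ L := fun i => φ (b i)
  let P : MvPolynomial (Option (Fin d ⊕ Fin d)) (integralClosure ℤ L) :=
    X none - ∑ i : Fin d, C (w i) * (X (some (Sum.inl i)) - X (some (Sum.inr i)))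
  have evalP : ∀ (x : integralClosure ℤ L) (c : Fin d ⊕ Fin d → integralClosure ℤ L),
      MvPolynomial.eval (Option.elim' x c) P
        = x - ∑ i : Fin d, w i * (c (Sum.inl i) - c (Sum.inr i)) := by
    intro x c
    simp only [P, map_sub, map_sum, map_mul, eval_X, eval_C]
    simp [Option.elim']
  have hset : {x : integralClosure ℤ L | ∃ y : NumberField.RingOfIntegers K,
        algebraMap K L (algebraMap (NumberField.RingOfIntegers K) K y) = (x : L)}
      = {x : integralClosure ℤ L | ∃ c : Fin d ⊕ Fin d → integralClosure ℤ L,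
        (∀ i, c i ∈ S) ∧ MvPolynomial.eval (Option.elim' x c) P = 0} := by
    ext x
    simp only [Set.mem_setOf_eq]
    constructor
    · rintro ⟨y, hy⟩
      have hxy : x = φ y := Subtype.ext (hy.symm.trans (roMap_coe K L y).symm)
      refine ⟨Sum.elim (fun i => (((b.repr y i).toNat : ℕ) : integralClosure ℤ L))
        (fun i => (((-(b.repr y i)).toNat : ℕ) : integralClosure ℤ L)), fun i => ?_, ?_⟩
      · rcases i with i | i
        · exact hNat _
        · exact hNat _
      · rw [evalP, sub_eq_zero, hxy]
        have hy2 : y = ∑ i : Fin d, b.repr y i • b i := (b.sum_repr y).symm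
        calc φ y = φ (∑ i : Fin d, b.repr y i • b i) := by rw [← hy2]
          _ = ∑ i : Fin d, b.repr y i • φ (b i) := by
              rw [map_sum]; exact Finset.sum_congr rfl fun i _ => map_zsmul φ _ _
          _ = ∑ i : Fin d, w i * ((((b.repr y i).toNat : ℕ) : integralClosure ℤ L)
                - (((-(b.repr y i)).toNat : ℕ) : integralClosure ℤ L)) := by
              refine Finset.sum_congr rfl fun i _ => ?_
              rw [zsmul_eq_mul, mul_comm]
              congr 1
              have hz : (((b.repr y i).toNat : ℕ) : ℤ) - ((((-(b.repr y i)).toNat : ℕ)) : ℤ)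
                  = b.repr y i := by omega
              calc ((b.repr y i : ℤ) : integralClosure ℤ L)
                  = (((((b.repr y i).toNat : ℕ) : ℤ)
                      - ((((-(b.repr y i)).toNat : ℕ)) : ℤ) : ℤ) : integralClosure ℤ L) := by
                    rw [hz]
                _ = _ := by push_cast; ring
          _ = _ := rfl
    · rintro ⟨c, hc, heq⟩
      choose u hu using fun i => hSub (c i) (hc i)
      have hcφ : ∀ i, c i = φ (u i) :=
        fun i => Subtype.ext ((hu i).symm.trans (roMap_coe K L (u i)).symm)
      refine ⟨∑ i : Fin d, (u (Sum.inl i) - u (Sum.inr i)) * b i, ?_⟩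
      have hx : x = φ (∑ i : Fin d, (u (Sum.inl i) - u (Sum.inr i)) * b i) := by
        rw [evalP, sub_eq_zero] at heq
        rw [heq, map_sum]
        refine Finset.sum_congr rfl fun i _ => ?_
        rw [map_mul, map_sub, ← hcφ, ← hcφ, mul_comm]
      rw [hx]
      exact (roMap_coe K L _)
  rw [hset]
  exact isDiophantineOver_of_dioOver'
    (dio_subst (dioOver'_of_isDiophantineOver hdio) (Fin d ⊕ Fin d) P)
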